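/- arXiv:1605.06530 — 2 statements merged into one kernel-verified Lean document; each statement's English description precedes it below -/
import Mathlib

section
/- Let G be a finite connected weighted graph. Then the linear system of (N choose 2) equations τ_{ii} = 0 for all i and τ_{ij} = 1 + (1/2) Σ_{k∈V} (p_{ik} τ_{kj} + p_{jk} τ_{ik}) for all i ≠ j (with the unknowns required to be symmetric, τ_{ij} = τ_{ji}) has exactly one solution (τ_{ij})_{i,j∈V} in the real numbers. -/
open Finset Filter Asymptotics

noncomputable section

namespace EvoGraph

variable {V : Type*} [Fintype V] [DecidableEq V]

/-- Weighted degree `w_i = ∑_j w_{ij}`. -/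
def deg (w : V → V → ℝ) (i : V) : ℝ := ∑ j, w i j

/-- Total edge weight `W = ∑_i w_i`. -/
def Wtot (w : V → V → ℝ) : ℝ := ∑ i, deg w i

/-- Random-walk step probability `p_{ij} = w_{ij}/w_i`. -/
def step (w : V → V → ℝ) (i j : V) : ℝ := w i j / deg w i

/-- The stochastic matrix `(p_{ij})`. -/
def stepMat (w : V → V → ℝ) : Matrix V V ℝ := Matrix.of fun i j => step w i j

/-- `n`-step probability `p^{(n)}_{ij}`: the `(i,j)` entry of the `n`-th power of `(p_{ij})`. -/
def stepN (w : V → V → ℝ) (n : ℕ) (i j : V) : ℝ := (stepMat w ^ n) i j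

/-- Stationary distribution `π_i = w_i / W`. -/
def statDist (w : V → V → ℝ) (i : V) : ℝ := deg w i / Wtot w

/-- `w` is a finite connected weighted graph: symmetric nonnegative weights
(self-loops allowed), positive weighted degrees, and any two vertices joined by
a path of edges of positive weight. -/
def IsWeightedGraph (w : V → V → ℝ) : Prop :=
  (∀ i j, w i j = w j i) ∧ (∀ i j, 0 ≤ w i j) ∧ (∀ i, 0 < deg w i) ∧
  ∀ i j : V, Relation.ReflTransGen (fun a b => 0 < w a b) i j

/-- `τ` is the (symmetric) solution of the coalescence-time system:
`τ_{ii} = 0`, and `τ_{ij} = 1 + (1/2) ∑_k (p_{ik} τ_{kj} + p_{jk} τ_{ik})` for `i ≠ j`. -/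
def IsCoalescent (w : V → V → ℝ) (τ : V → V → ℝ) : Prop :=
  (∀ i j, τ i j = τ j i) ∧ (∀ i, τ i i = 0) ∧
  ∀ i j, i ≠ j →
    τ i j = 1 + (1 / 2) * ∑ k, (step w i k * τ k j + step w j k * τ i k)

/-- `τ^{(n)} = ∑_{i,j} π_i p^{(n)}_{ij} τ_{ij}`. -/
def tauWalk (w τ : V → V → ℝ) (n : ℕ) : ℝ :=
  ∑ i, ∑ j, statDist w i * stepN w n i j * τ i j

/-- Remeeting time `τ⁺_i = 1 + ∑_j p_{ij} τ_{ij}`. -/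
def remeet (w τ : V → V → ℝ) (i : V) : ℝ := 1 + ∑ j, step w i j * τ i j

lemma step_nonneg (w : V → V → ℝ) (hG : IsWeightedGraph w) (i k : V) : 0 ≤ step w i k :=
  div_nonneg (hG.2.1 i k) (hG.2.2.1 i).le

lemma sum_step (w : V → V → ℝ) (hG : IsWeightedGraph w) (i : V) : ∑ k, step w i k = 1 := by
  unfold step
  rw [← Finset.sum_div]
  exact div_self (hG.2.2.1 i).ne'

/-- The coalescence linear operator. -/
def coalOp (w : V → V → ℝ) : (V → V → ℝ) →ₗ[ℝ] (V → V → ℝ) where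
  toFun f := fun i j => if i = j then f i j
    else f i j - (1/2) * ∑ k, (step w i k * f k j + step w j k * f i k)
  map_add' f g := by
    funext i j
    by_cases h : i = j
    · simp only [h, Pi.add_apply, if_pos rfl, ite_true]
    · simp only [Pi.add_apply, if_neg h]
      have : ∑ k, (step w i k * (f k j + g k j) + step w j k * (f i k + g i k)) =
          (∑ k, (step w i k * f k j + step w j k * f i k)) +
          ∑ k, (step w i k * g k j + step w j k * g i k) := by
        rw [← Finset.sum_add_distrib]
        exact Finset.sum_congr rfl fun k _ => by ring
      rw [this]; ring
  map_smul' c f := by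
    funext i j
    by_cases h : i = j
    · simp only [h, Pi.smul_apply, smul_eq_mul, RingHom.id_apply, if_pos rfl, ite_true]
    · simp only [Pi.smul_apply, smul_eq_mul, RingHom.id_apply, if_neg h]
      have : ∑ k, (step w i k * (c * f k j) + step w j k * (c * f i k)) =
          c * ∑ k, (step w i k * f k j + step w j k * f i k) := by
        rw [Finset.mul_sum]
        exact Finset.sum_congr rfl fun k _ => by ring
      rw [this]; ring

lemma ker_nonpos (w : V → V → ℝ) (hG : IsWeightedGraph w) (g : V → V → ℝ)
    (hdiag : ∀ i, g i i = 0)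
    (hharm : ∀ i j, i ≠ j →
      g i j = (1/2) * ∑ k, (step w i k * g k j + step w j k * g i k)) :
    ∀ i j, g i j ≤ 0 := by
  by_contra hpos
  push_neg at hpos
  obtain ⟨i1, j1, hij1⟩ := hpos
  obtain ⟨⟨i0, j0⟩, -, hmax⟩ := Finset.exists_max_image (Finset.univ : Finset (V × V))
    (fun p => g p.1 p.2) ⟨(i1, j1), Finset.mem_univ _⟩
  set M : ℝ := g i0 j0 with hM
  have hle : ∀ a b, g a b ≤ M := fun a b => hmax (a, b) (Finset.mem_univ _)
  have hMpos : 0 < M := lt_of_lt_of_le hij1 (hle i1 j1)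
  have key : ∀ a, Relation.ReflTransGen (fun a b => 0 < w a b) a j0 →
      g a j0 = M → False := by
    intro a hRT
    induction hRT using Relation.ReflTransGen.head_induction_on with
    | refl =>
      intro hjj
      rw [hdiag j0] at hjj
      exact absurd hjj.symm (ne_of_gt hMpos)
    | head hac hcb ihc =>
      rename_i a c
      intro haM
      have hne : a ≠ j0 := by
        intro h; subst h
        rw [hdiag] at haM
        exact absurd haM.symm (ne_of_gt hMpos)
      have heq := hharm a j0 hne
      have hsum : ∑ k, ((1/2) * (step w a k * (M - g k j0)) +
          (1/2) * (step w j0 k * (M - g a k))) = 0 := by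
        have h1 : ∑ k, step w a k = 1 := sum_step w hG a
        have h2 : ∑ k, step w j0 k = 1 := sum_step w hG j0
        have hexp : ∀ k : V, (1/2) * (step w a k * (M - g k j0)) +
            (1/2) * (step w j0 k * (M - g a k)) =
            (M/2) * step w a k + (M/2) * step w j0 k -
            (1/2) * (step w a k * g k j0 + step w j0 k * g a k) := by
          intro k; ring
        rw [Finset.sum_congr rfl (fun k _ => hexp k), Finset.sum_sub_distrib,
          Finset.sum_add_distrib, ← Finset.mul_sum, ← Finset.mul_sum, h1, h2,
          ← Finset.mul_sum, ← heq, haM]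
        ring
      have hnn : ∀ k ∈ (Finset.univ : Finset V),
          0 ≤ (1/2) * (step w a k * (M - g k j0)) +
            (1/2) * (step w j0 k * (M - g a k)) := by
        intro k _
        have t1 : 0 ≤ step w a k * (M - g k j0) :=
          mul_nonneg (step_nonneg w hG a k) (sub_nonneg.mpr (hle k j0))
        have t2 : 0 ≤ step w j0 k * (M - g a k) :=
          mul_nonneg (step_nonneg w hG j0 k) (sub_nonneg.mpr (hle a k))
        nlinarith
      have hzero := (Finset.sum_eq_zero_iff_of_nonneg hnn).mp hsum c (Finset.mem_univ _)
      have t1 : 0 ≤ (1/2) * (step w a c * (M - g c j0)) :=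
        mul_nonneg (by norm_num) (mul_nonneg (step_nonneg w hG a c)
          (sub_nonneg.mpr (hle c j0)))
      have t2 : 0 ≤ (1/2) * (step w j0 c * (M - g a c)) :=
        mul_nonneg (by norm_num) (mul_nonneg (step_nonneg w hG j0 c)
          (sub_nonneg.mpr (hle a c)))
      have h12 : (1/2) * (step w a c * (M - g c j0)) = 0 := by linarith
      have hstep : 0 < step w a c := div_pos hac (hG.2.2.1 a)
      have : M - g c j0 = 0 := by
        rcases mul_eq_zero.mp h12 with h | h
        · norm_num at h
        · rcases mul_eq_zero.mp h with h' | h'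
          · exact absurd h' (ne_of_gt hstep)
          · exact h'
      exact ihc (by linarith)
  exact key i0 (hG.2.2.2 i0 j0) rfl

lemma ker_eq_zero (w : V → V → ℝ) (hG : IsWeightedGraph w) (g : V → V → ℝ)
    (hdiag : ∀ i, g i i = 0)
    (hharm : ∀ i j, i ≠ j →
      g i j = (1/2) * ∑ k, (step w i k * g k j + step w j k * g i k)) :
    g = 0 := by
  have h1 := ker_nonpos w hG g hdiag hharm
  have h2 := ker_nonpos w hG (fun i j => -g i j) (fun i => by simp [hdiag i])
    (by
      intro i j hne
      have := hharm i j hne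
      have hs : ∑ k, (step w i k * (-g k j) + step w j k * (-g i k)) =
          -∑ k, (step w i k * g k j + step w j k * g i k) := by
        rw [← Finset.sum_neg_distrib]
        exact Finset.sum_congr rfl fun k _ => by ring
      simp only [hs]
      linarith)
  funext i j
  have := h2 i j
  simp only [Pi.zero_apply]
  have h1' := h1 i j
  simp at this
  linarith

/-- the coalescence-time system (`τ_{ii} = 0`,
`τ_{ij} = 1 + (1/2)∑_k (p_{ik} τ_{kj} + p_{jk} τ_{ik})` for `i ≠ j`, with the
unknowns required to be symmetric) has exactly one real solution. -/
theorem coalescent_existsUnique (w : V → V → ℝ) (hG : IsWeightedGraph w)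
    (hN : 2 ≤ Fintype.card V) :
    ∃! τ : V → V → ℝ, IsCoalescent w τ := by
  classical
  set b : V → V → ℝ := fun i j => if i = j then 0 else 1 with hb
  -- injectivity of the coalescence operator
  have hinj : Function.Injective (coalOp w) := by
    intro f g hfg
    have hker : coalOp w (f - g) = 0 := by rw [map_sub, hfg, sub_self]
    have hdiag : ∀ i, (f - g) i i = 0 := by
      intro i
      have := congrFun (congrFun hker i) i
      simpa [coalOp] using this
    have hharm : ∀ i j, i ≠ j → (fun a c => (f - g) a c) i j =
        (1/2) * ∑ k, (step w i k * (f - g) k j + step w j k * (f - g) i k) := by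
      intro i j hij
      have := congrFun (congrFun hker i) j
      simp only [coalOp, LinearMap.coe_mk, AddHom.coe_mk, if_neg hij, Pi.zero_apply] at this
      linarith
    have := ker_eq_zero w hG (fun a c => (f - g) a c) hdiag hharm
    funext i j
    have := congrFun (congrFun this i) j
    simp only [Pi.sub_apply, Pi.zero_apply] at this
    linarith
  -- characterization of solutions of `coalOp w τ = b`
  have hchar : ∀ τ : V → V → ℝ, coalOp w τ = b ↔
      ((∀ i, τ i i = 0) ∧ ∀ i j, i ≠ j →
        τ i j = 1 + (1/2) * ∑ k, (step w i k * τ k j + step w j k * τ i k)) := by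
    intro τ
    constructor
    · intro h
      constructor
      · intro i
        have := congrFun (congrFun h i) i
        simpa [coalOp, hb] using this
      · intro i j hij
        have := congrFun (congrFun h i) j
        simp only [coalOp, LinearMap.coe_mk, AddHom.coe_mk, if_neg hij, hb] at this
        linarith
    · intro ⟨h1, h2⟩
      funext i j
      by_cases hij : i = j
      · subst hij; simpa [coalOp, hb] using h1 i
      · have := h2 i j hij
        simp only [coalOp, LinearMap.coe_mk, AddHom.coe_mk, if_neg hij, hb]
        linarith
  -- surjectivity gives a solution
  have hsurj : Function.Surjective (coalOp w) :=
    (LinearMap.injective_iff_surjective).mp hinj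
  obtain ⟨τ0, hτ0⟩ := hsurj b
  obtain ⟨hd0, hh0⟩ := (hchar τ0).mp hτ0
  -- the transpose is also a solution, hence τ0 is symmetric
  have hτ0t : coalOp w (fun i j => τ0 j i) = b := by
    rw [hchar]
    refine ⟨fun i => hd0 i, ?_⟩
    intro i j hij
    have := hh0 j i (Ne.symm hij)
    have hs : ∑ k, (step w i k * τ0 j k + step w j k * τ0 k i) =
        ∑ k, (step w j k * τ0 k i + step w i k * τ0 j k) :=
      Finset.sum_congr rfl fun k _ => by ring
    rw [hs]
    exact this
  have hsymm : ∀ i j, τ0 i j = τ0 j i := by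
    have := hinj (hτ0t.trans hτ0.symm)
    intro i j
    exact (congrFun (congrFun this i) j).symm
  refine ⟨τ0, ⟨hsymm, hd0, fun i j hij => hh0 i j hij⟩, ?_⟩
  intro τ' ⟨hs', hd', hh'⟩
  apply hinj
  rw [hτ0, hchar]
  exact ⟨hd', fun i j hij => hh' i j hij⟩

end EvoGraph
end
end

section
/- Let G be the unweighted graph obtained by joining two n-stars at their hubs (n ≥ 1): the vertices are two hubs H₁, H₂ and 2n leaves, each hub is joined by a weight-1 edge to its own n leaves, the two hubs are joined by a weight-1 edge, and all other weights are zero (so N = 2n + 2). Then the critical benefit-to-cost ratio of G satisfies (b/c)* = (n+1)²(10n² + 17n + 5) / (n(4n³ + 12n² + 11n + 5)); in particular (b/c)* → 5/2 as n → ∞. -/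
open Finset Filter Asymptotics

noncomputable section

namespace EvoGraph

variable {V : Type*} [Fintype V] [DecidableEq V]

/-- Two `n`-stars joined at their hubs: hubs `Sum.inl b` (`b : Bool`), leaves
`Sum.inr (b, ℓ)` belonging to hub `b`. Each hub is joined by a weight-1 edge to
its own `n` leaves and to the other hub; all other weights are zero. -/
def twoStarsW (n : ℕ) : (Bool ⊕ Bool × Fin n) → (Bool ⊕ Bool × Fin n) → ℝ
  | Sum.inl a, Sum.inl b => if a = b then 0 else 1
  | Sum.inl a, Sum.inr (b, _) => if a = b then 1 else 0
  | Sum.inr (b, _), Sum.inl a => if a = b then 1 else 0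
  | Sum.inr _, Sum.inr _ => 0

lemma sum_V {n : ℕ} (f : Bool ⊕ Bool × Fin n → ℝ) :
    ∑ x, f x = f (Sum.inl false) + f (Sum.inl true)
      + ((∑ ℓ : Fin n, f (Sum.inr (false, ℓ))) + ∑ ℓ : Fin n, f (Sum.inr (true, ℓ))) := by
  rw [Fintype.sum_sum_type, Fintype.sum_prod_type, Fintype.sum_bool, Fintype.sum_bool]
  ring

lemma deg_inl {n : ℕ} (a : Bool) : deg (twoStarsW n) (Sum.inl a) = (n : ℝ) + 1 := by
  rw [deg, sum_V]
  cases a <;> simp [twoStarsW] <;> ring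

lemma deg_inr {n : ℕ} (p : Bool × Fin n) : deg (twoStarsW n) (Sum.inr p) = 1 := by
  obtain ⟨b, ℓ⟩ := p
  rw [deg, sum_V]
  cases b <;> simp [twoStarsW]

lemma step_ll {n : ℕ} (a b : Bool) :
    step (twoStarsW n) (Sum.inl a) (Sum.inl b) = if a = b then 0 else 1 / ((n : ℝ) + 1) := by
  rw [step, deg_inl]
  cases a <;> cases b <;> simp [twoStarsW]

lemma step_lr {n : ℕ} (a b : Bool) (ℓ : Fin n) :
    step (twoStarsW n) (Sum.inl a) (Sum.inr (b, ℓ)) = if a = b then 1 / ((n : ℝ) + 1) else 0 := by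
  rw [step, deg_inl]
  cases a <;> cases b <;> simp [twoStarsW]

lemma step_rl {n : ℕ} (a b : Bool) (ℓ : Fin n) :
    step (twoStarsW n) (Sum.inr (b, ℓ)) (Sum.inl a) = if a = b then 1 else 0 := by
  rw [step, deg_inr]
  cases a <;> cases b <;> simp [twoStarsW]

lemma step_rr {n : ℕ} (p q : Bool × Fin n) :
    step (twoStarsW n) (Sum.inr p) (Sum.inr q) = 0 := by
  obtain ⟨b, ℓ⟩ := p; obtain ⟨c, m⟩ := q
  rw [step, deg_inr]
  simp [twoStarsW]

lemma stepN_one {n : ℕ} (w : (Bool ⊕ Bool × Fin n) → _ → ℝ) (i j) :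
    stepN w 1 i j = step w i j := by
  rw [stepN, pow_one]; rfl

lemma stepN_succ {n : ℕ} (w : (Bool ⊕ Bool × Fin n) → _ → ℝ) (k : ℕ) (i j) :
    stepN w (k + 1) i j = ∑ m, stepN w k i m * step w m j := by
  rw [stepN, pow_succ, Matrix.mul_apply]; rfl

lemma p1_ll {n : ℕ} (a b : Bool) :
    stepN (twoStarsW n) 1 (Sum.inl a) (Sum.inl b) = if a = b then 0 else 1 / ((n : ℝ) + 1) := by
  rw [stepN_one, step_ll]

lemma p1_lr {n : ℕ} (a b : Bool) (ℓ : Fin n) :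
    stepN (twoStarsW n) 1 (Sum.inl a) (Sum.inr (b, ℓ)) = if a = b then 1 / ((n : ℝ) + 1) else 0 := by
  rw [stepN_one, step_lr]

lemma p1_rl {n : ℕ} (a b : Bool) (ℓ : Fin n) :
    stepN (twoStarsW n) 1 (Sum.inr (b, ℓ)) (Sum.inl a) = if a = b then 1 else 0 := by
  rw [stepN_one, step_rl]

lemma p1_rr {n : ℕ} (b c : Bool) (ℓ m : Fin n) :
    stepN (twoStarsW n) 1 (Sum.inr (b, ℓ)) (Sum.inr (c, m)) = if b = c then 0 else 0 := by
  rw [stepN_one, step_rr]; simp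

lemma p2_ll {n : ℕ} (a b : Bool) :
    stepN (twoStarsW n) 2 (Sum.inl a) (Sum.inl b) =
      if a = b then ((n : ℝ) * ((n : ℝ) + 1) + 1) / ((n : ℝ) + 1) ^ 2 else 0 := by
  have hx : ((n : ℝ) + 1) ≠ 0 := by positivity
  rw [show (2 : ℕ) = 1 + 1 from rfl, stepN_succ]
  rw [sum_V]
  simp only [stepN_one, step_ll, step_lr, step_rl, step_rr, mul_zero, zero_mul,
    Finset.sum_const_zero]
  cases a <;> cases b <;>
    simp [Finset.sum_const, Finset.card_univ, nsmul_eq_mul] <;>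
    field_simp <;> ring

lemma p2_lr {n : ℕ} (a b : Bool) (ℓ : Fin n) :
    stepN (twoStarsW n) 2 (Sum.inl a) (Sum.inr (b, ℓ)) =
      if a = b then 0 else 1 / ((n : ℝ) + 1) ^ 2 := by
  have hx : ((n : ℝ) + 1) ≠ 0 := by positivity
  rw [show (2 : ℕ) = 1 + 1 from rfl, stepN_succ, sum_V]
  simp only [stepN_one, step_ll, step_lr, step_rl, step_rr, mul_zero, zero_mul,
    Finset.sum_const_zero]
  cases a <;> cases b <;>
    simp [Finset.sum_const, Finset.card_univ, nsmul_eq_mul] <;>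
    field_simp <;> ring

lemma p2_rl {n : ℕ} (a b : Bool) (ℓ : Fin n) :
    stepN (twoStarsW n) 2 (Sum.inr (b, ℓ)) (Sum.inl a) =
      if a = b then 0 else 1 / ((n : ℝ) + 1) := by
  have hx : ((n : ℝ) + 1) ≠ 0 := by positivity
  rw [show (2 : ℕ) = 1 + 1 from rfl, stepN_succ, sum_V]
  simp only [stepN_one, step_ll, step_lr, step_rl, step_rr, mul_zero, zero_mul,
    Finset.sum_const_zero]
  cases a <;> cases b <;>
    simp [Finset.sum_const, Finset.card_univ, nsmul_eq_mul] <;>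
    field_simp <;> ring

lemma p2_rr {n : ℕ} (b c : Bool) (ℓ m : Fin n) :
    stepN (twoStarsW n) 2 (Sum.inr (b, ℓ)) (Sum.inr (c, m)) =
      if b = c then 1 / ((n : ℝ) + 1) else 0 := by
  have hx : ((n : ℝ) + 1) ≠ 0 := by positivity
  rw [show (2 : ℕ) = 1 + 1 from rfl, stepN_succ, sum_V]
  simp only [stepN_one, step_ll, step_lr, step_rl, step_rr, mul_zero, zero_mul,
    Finset.sum_const_zero]
  cases b <;> cases c <;>
    simp [Finset.sum_const, Finset.card_univ, nsmul_eq_mul] <;>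
    field_simp <;> ring

lemma p3_ll {n : ℕ} (a b : Bool) :
    stepN (twoStarsW n) 3 (Sum.inl a) (Sum.inl b) =
      if a = b then 0 else (2 * (n : ℝ) ^ 2 + 2 * n + 1) / ((n : ℝ) + 1) ^ 3 := by
  have hx : ((n : ℝ) + 1) ≠ 0 := by positivity
  rw [show (3 : ℕ) = 2 + 1 from rfl, stepN_succ, sum_V]
  simp only [p2_ll, p2_lr, p2_rl, p2_rr, step_ll, step_lr, step_rl, step_rr, mul_zero,
    zero_mul, Finset.sum_const_zero]
  cases a <;> cases b <;>
    simp [Finset.sum_const, Finset.card_univ, nsmul_eq_mul] <;>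
    field_simp <;> ring

lemma p3_lr {n : ℕ} (a b : Bool) (ℓ : Fin n) :
    stepN (twoStarsW n) 3 (Sum.inl a) (Sum.inr (b, ℓ)) =
      if a = b then ((n : ℝ) ^ 2 + n + 1) / ((n : ℝ) + 1) ^ 3 else 0 := by
  have hx : ((n : ℝ) + 1) ≠ 0 := by positivity
  rw [show (3 : ℕ) = 2 + 1 from rfl, stepN_succ, sum_V]
  simp only [p2_ll, p2_lr, p2_rl, p2_rr, step_ll, step_lr, step_rl, step_rr, mul_zero,
    zero_mul, Finset.sum_const_zero]
  cases a <;> cases b <;>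
    simp [Finset.sum_const, Finset.card_univ, nsmul_eq_mul] <;>
    field_simp <;> ring

lemma p3_rl {n : ℕ} (a b : Bool) (ℓ : Fin n) :
    stepN (twoStarsW n) 3 (Sum.inr (b, ℓ)) (Sum.inl a) =
      if a = b then ((n : ℝ) ^ 2 + n + 1) / ((n : ℝ) + 1) ^ 2 else 0 := by
  have hx : ((n : ℝ) + 1) ≠ 0 := by positivity
  rw [show (3 : ℕ) = 2 + 1 from rfl, stepN_succ, sum_V]
  simp only [p2_ll, p2_lr, p2_rl, p2_rr, step_ll, step_lr, step_rl, step_rr, mul_zero,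
    zero_mul, Finset.sum_const_zero]
  cases a <;> cases b <;>
    simp [Finset.sum_const, Finset.card_univ, nsmul_eq_mul] <;>
    field_simp <;> ring

lemma p3_rr {n : ℕ} (b c : Bool) (ℓ m : Fin n) :
    stepN (twoStarsW n) 3 (Sum.inr (b, ℓ)) (Sum.inr (c, m)) =
      if b = c then 0 else 1 / ((n : ℝ) + 1) ^ 2 := by
  have hx : ((n : ℝ) + 1) ≠ 0 := by positivity
  rw [show (3 : ℕ) = 2 + 1 from rfl, stepN_succ, sum_V]
  simp only [p2_ll, p2_lr, p2_rl, p2_rr, step_ll, step_lr, step_rl, step_rr, mul_zero,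
    zero_mul, Finset.sum_const_zero]
  cases b <;> cases c <;>
    simp [Finset.sum_const, Finset.card_univ, nsmul_eq_mul] <;>
    field_simp <;> ring

lemma Wtot_twoStars {n : ℕ} : Wtot (twoStarsW n) = 4 * (n : ℝ) + 2 := by
  rw [Wtot, sum_V]
  simp [deg_inl, deg_inr, Finset.sum_const, Finset.card_univ, nsmul_eq_mul]
  ring

lemma statDist_inl {n : ℕ} (a : Bool) :
    statDist (twoStarsW n) (Sum.inl a) = ((n : ℝ) + 1) / (4 * (n : ℝ) + 2) := by
  rw [statDist, deg_inl, Wtot_twoStars]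

lemma statDist_inr {n : ℕ} (p : Bool × Fin n) :
    statDist (twoStarsW n) (Sum.inr p) = 1 / (4 * (n : ℝ) + 2) := by
  rw [statDist, deg_inr, Wtot_twoStars]

lemma tauWalk_eval {n : ℕ} (τ : (Bool ⊕ Bool × Fin n) → (Bool ⊕ Bool × Fin n) → ℝ)
    (hsym : ∀ i j, τ i j = τ j i) (hzero : ∀ i, τ i i = 0)
    (k : ℕ) (α β γ δ γ' δ' ε ζ : ℝ)
    (hll : ∀ a b : Bool, stepN (twoStarsW n) k (Sum.inl a) (Sum.inl b) = if a = b then α else β)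
    (hlr : ∀ (a b : Bool) (ℓ : Fin n),
      stepN (twoStarsW n) k (Sum.inl a) (Sum.inr (b, ℓ)) = if a = b then γ else δ)
    (hrl : ∀ (a b : Bool) (ℓ : Fin n),
      stepN (twoStarsW n) k (Sum.inr (b, ℓ)) (Sum.inl a) = if a = b then γ' else δ')
    (hrr : ∀ (b c : Bool) (ℓ m : Fin n),
      stepN (twoStarsW n) k (Sum.inr (b, ℓ)) (Sum.inr (c, m)) = if b = c then ε else ζ) :
    tauWalk (twoStarsW n) τ k =
      (2 * ((n : ℝ) + 1) * β * τ (Sum.inl false) (Sum.inl true)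
       + (((n : ℝ) + 1) * γ + γ') *
          ((∑ ℓ, τ (Sum.inl false) (Sum.inr (false, ℓ))) + ∑ ℓ, τ (Sum.inl true) (Sum.inr (true, ℓ)))
       + (((n : ℝ) + 1) * δ + δ') *
          ((∑ ℓ, τ (Sum.inl false) (Sum.inr (true, ℓ))) + ∑ ℓ, τ (Sum.inl true) (Sum.inr (false, ℓ)))
       + ε * ((∑ ℓ, ∑ m, τ (Sum.inr (false, ℓ)) (Sum.inr (false, m)))
              + ∑ ℓ, ∑ m, τ (Sum.inr (true, ℓ)) (Sum.inr (true, m)))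
       + 2 * ζ * (∑ ℓ, ∑ m, τ (Sum.inr (false, ℓ)) (Sum.inr (true, m))))
      / (4 * (n : ℝ) + 2) := by
  have hW : (4 * (n : ℝ) + 2) ≠ 0 := by positivity
  have hsym1 : ∀ (a : Bool) (p : Bool × Fin n), τ (Sum.inr p) (Sum.inl a) = τ (Sum.inl a) (Sum.inr p) :=
    fun a p => hsym _ _
  have hsym2 : ∀ ℓ m : Fin n,
      τ (Sum.inr (true, ℓ)) (Sum.inr (false, m)) = τ (Sum.inr (false, m)) (Sum.inr (true, ℓ)) :=
    fun _ _ => hsym _ _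
  have hsym3 : τ (Sum.inl true) (Sum.inl false) = τ (Sum.inl false) (Sum.inl true) := hsym _ _
  have hE : (∑ ℓ : Fin n, ∑ m : Fin n, τ (Sum.inr (false, m)) (Sum.inr (true, ℓ)))
      = ∑ ℓ : Fin n, ∑ m : Fin n, τ (Sum.inr (false, ℓ)) (Sum.inr (true, m)) := by
    rw [Finset.sum_comm]
  simp only [tauWalk, sum_V]
  simp only [statDist_inl, statDist_inr, hll, hlr, hrl, hrr, hzero, hsym1, hsym2, hsym3]
  simp only [Bool.false_eq_true, Bool.true_eq_false, if_true, if_false, ite_true, ite_false,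
    reduceIte, mul_zero, zero_mul, add_zero, zero_add, Finset.sum_const_zero,
    Finset.sum_add_distrib, ← Finset.mul_sum]
  rw [hE]
  field_simp
  ring

set_option maxHeartbeats 2000000 in
lemma twoStars_ratio {n : ℕ} (hn : 1 ≤ n)
    (τ : (Bool ⊕ Bool × Fin n) → (Bool ⊕ Bool × Fin n) → ℝ)
    (hc : IsCoalescent (twoStarsW n) τ) :
    tauWalk (twoStarsW n) τ 2 /
        (tauWalk (twoStarsW n) τ 3 - tauWalk (twoStarsW n) τ 1) =
      ((n : ℝ) + 1) ^ 2 * (10 * (n : ℝ) ^ 2 + 17 * n + 5) /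
        ((n : ℝ) * (4 * (n : ℝ) ^ 3 + 12 * (n : ℝ) ^ 2 + 11 * n + 5)) := by
  obtain ⟨hsym, hzero, heq⟩ := hc
  set x : ℝ := (n : ℝ) with hxdef
  have hx1 : (1 : ℝ) ≤ x := by rw [hxdef]; exact_mod_cast hn
  have hx0 : (0 : ℝ) < x := lt_of_lt_of_le one_pos hx1
  have hxp : x + 1 ≠ 0 := by positivity
  have hW : (4 * x + 2) ≠ 0 := by positivity
  have h25 : (2 * x + 5) ≠ 0 := by positivity
  have hNY : (16 * x ^ 5 + 48 * x ^ 4 + 44 * x ^ 3 + 20 * x ^ 2 : ℝ) ≠ 0 := by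
    have h2 : (0:ℝ) < x ^ 2 := pow_pos hx0 2
    have h3 : (0:ℝ) < x ^ 3 := pow_pos hx0 3
    have h4 : (0:ℝ) < x ^ 4 := pow_pos hx0 4
    have h5 : (0:ℝ) < x ^ 5 := pow_pos hx0 5
    have : (0:ℝ) < 16 * x ^ 5 + 48 * x ^ 4 + 44 * x ^ 3 + 20 * x ^ 2 := by linarith
    exact ne_of_gt this
  have hQ : x * (4 * x ^ 3 + 12 * x ^ 2 + 11 * x + 5) ≠ 0 := by
    have h1 : (0 : ℝ) < 4 * x ^ 3 + 12 * x ^ 2 + 11 * x + 5 := by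
      have h2 : (0:ℝ) < x ^ 2 := pow_pos hx0 2
      have h3 : (0:ℝ) < x ^ 3 := pow_pos hx0 3
      linarith
    exact ne_of_gt (mul_pos hx0 h1)
  have hsym1 : ∀ (a : Bool) (p : Bool × Fin n), τ (Sum.inr p) (Sum.inl a) = τ (Sum.inl a) (Sum.inr p) :=
    fun a p => hsym _ _
  have hsym2 : ∀ ℓ m : Fin n,
      τ (Sum.inr (true, ℓ)) (Sum.inr (false, m)) = τ (Sum.inr (false, m)) (Sum.inr (true, ℓ)) :=
    fun _ _ => hsym _ _
  have hsym3 : τ (Sum.inl true) (Sum.inl false) = τ (Sum.inl false) (Sum.inl true) := hsym _ _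
  set A : ℝ := τ (Sum.inl false) (Sum.inl true) with hAdef
  set Bf : ℝ := ∑ ℓ, τ (Sum.inl false) (Sum.inr (false, ℓ)) with hBfdef
  set Bt : ℝ := ∑ ℓ, τ (Sum.inl true) (Sum.inr (true, ℓ)) with hBtdef
  set Cf : ℝ := ∑ ℓ, τ (Sum.inl false) (Sum.inr (true, ℓ)) with hCfdef
  set Ct : ℝ := ∑ ℓ, τ (Sum.inl true) (Sum.inr (false, ℓ)) with hCtdef
  set Df : ℝ := ∑ ℓ, ∑ m, τ (Sum.inr (false, ℓ)) (Sum.inr (false, m)) with hDfdef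
  set Dt : ℝ := ∑ ℓ, ∑ m, τ (Sum.inr (true, ℓ)) (Sum.inr (true, m)) with hDtdef
  set E : ℝ := ∑ ℓ, ∑ m, τ (Sum.inr (false, ℓ)) (Sum.inr (true, m)) with hEdef
  -- hub-hub equation
  have eA : 2 * (x + 1) * A = 2 * (x + 1) + (Cf + Ct) := by
    have h := heq (Sum.inl false) (Sum.inl true) (by simp)
    rw [sum_V] at h
    simp only [step_ll, step_lr, step_rl, step_rr, hzero, hsym1, hsym2, hsym3,
      Bool.false_eq_true, Bool.true_eq_false, reduceIte, mul_zero, zero_mul, add_zero,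
      zero_add, Finset.sum_const_zero, Finset.sum_add_distrib, ← Finset.mul_sum] at h
    rw [← hAdef, ← hCfdef, ← hCtdef] at h
    field_simp at h
    linarith
  -- hub - own leaf equations
  have hBfp : ∀ ℓ : Fin n, 2 * (x + 1) * τ (Sum.inl false) (Sum.inr (false, ℓ)) =
      2 * (x + 1) + τ (Sum.inl true) (Sum.inr (false, ℓ))
        + ∑ m, τ (Sum.inr (false, m)) (Sum.inr (false, ℓ)) := by
    intro ℓ
    have h := heq (Sum.inl false) (Sum.inr (false, ℓ)) (by simp)
    rw [sum_V] at h
    simp only [step_ll, step_lr, step_rl, step_rr, hzero, hsym1, hsym2, hsym3,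
      Bool.false_eq_true, Bool.true_eq_false, reduceIte, mul_zero, zero_mul, add_zero,
      zero_add, Finset.sum_const_zero, Finset.sum_add_distrib, ← Finset.mul_sum] at h
    field_simp at h
    linarith
  have hBtp : ∀ ℓ : Fin n, 2 * (x + 1) * τ (Sum.inl true) (Sum.inr (true, ℓ)) =
      2 * (x + 1) + τ (Sum.inl false) (Sum.inr (true, ℓ))
        + ∑ m, τ (Sum.inr (true, m)) (Sum.inr (true, ℓ)) := by
    intro ℓ
    have h := heq (Sum.inl true) (Sum.inr (true, ℓ)) (by simp)
    rw [sum_V] at h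
    simp only [step_ll, step_lr, step_rl, step_rr, hzero, hsym1, hsym2, hsym3,
      Bool.false_eq_true, Bool.true_eq_false, reduceIte, mul_zero, zero_mul, add_zero,
      zero_add, Finset.sum_const_zero, Finset.sum_add_distrib, ← Finset.mul_sum] at h
    field_simp at h
    linarith
  have eBf : 2 * (x + 1) * Bf = 2 * (x + 1) * x + Ct + Df := by
    have hs : ∑ ℓ : Fin n, (2 * (x + 1) * τ (Sum.inl false) (Sum.inr (false, ℓ))) =
        ∑ ℓ : Fin n, (2 * (x + 1) + τ (Sum.inl true) (Sum.inr (false, ℓ))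
          + ∑ m, τ (Sum.inr (false, m)) (Sum.inr (false, ℓ))) :=
      Finset.sum_congr rfl fun ℓ _ => hBfp ℓ
    simp only [Finset.sum_add_distrib, ← Finset.mul_sum, Finset.sum_const, Finset.card_univ,
      Fintype.card_fin, nsmul_eq_mul] at hs
    have hcomm : (∑ l : Fin n, ∑ m : Fin n, τ (Sum.inr (false, m)) (Sum.inr (false, l))) = Df := by
      rw [hDfdef]; rw [Finset.sum_comm]
    rw [hcomm] at hs
    rw [← hxdef, ← hBfdef, ← hCtdef] at hs
    linarith
  have eBt : 2 * (x + 1) * Bt = 2 * (x + 1) * x + Cf + Dt := by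
    have hs : ∑ ℓ : Fin n, (2 * (x + 1) * τ (Sum.inl true) (Sum.inr (true, ℓ))) =
        ∑ ℓ : Fin n, (2 * (x + 1) + τ (Sum.inl false) (Sum.inr (true, ℓ))
          + ∑ m, τ (Sum.inr (true, m)) (Sum.inr (true, ℓ))) :=
      Finset.sum_congr rfl fun ℓ _ => hBtp ℓ
    simp only [Finset.sum_add_distrib, ← Finset.mul_sum, Finset.sum_const, Finset.card_univ,
      Fintype.card_fin, nsmul_eq_mul] at hs
    have hcomm : (∑ l : Fin n, ∑ m : Fin n, τ (Sum.inr (true, m)) (Sum.inr (true, l))) = Dt := by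
      rw [hDtdef]; rw [Finset.sum_comm]
    rw [hcomm] at hs
    rw [← hxdef, ← hBtdef, ← hCfdef] at hs
    linarith
  -- hub - other leaf equations
  have hCfp : ∀ m : Fin n, 2 * (x + 1) * τ (Sum.inl false) (Sum.inr (true, m)) =
      2 * (x + 1) + τ (Sum.inl true) (Sum.inr (true, m))
        + (∑ ℓ, τ (Sum.inr (false, ℓ)) (Sum.inr (true, m))) + (x + 1) * A := by
    intro m
    have h := heq (Sum.inl false) (Sum.inr (true, m)) (by simp)
    rw [sum_V] at h
    simp only [step_ll, step_lr, step_rl, step_rr, hzero, hsym1, hsym2, hsym3,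
      Bool.false_eq_true, Bool.true_eq_false, reduceIte, mul_zero, zero_mul, add_zero,
      zero_add, Finset.sum_const_zero, Finset.sum_add_distrib, ← Finset.mul_sum] at h
    rw [← hAdef] at h
    field_simp at h
    linarith
  have hCtp : ∀ m : Fin n, 2 * (x + 1) * τ (Sum.inl true) (Sum.inr (false, m)) =
      2 * (x + 1) + τ (Sum.inl false) (Sum.inr (false, m))
        + (∑ ℓ, τ (Sum.inr (false, m)) (Sum.inr (true, ℓ))) + (x + 1) * A := by
    intro m
    have h := heq (Sum.inl true) (Sum.inr (false, m)) (by simp)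
    rw [sum_V] at h
    simp only [step_ll, step_lr, step_rl, step_rr, hzero, hsym1, hsym2, hsym3,
      Bool.false_eq_true, Bool.true_eq_false, reduceIte, mul_zero, zero_mul, add_zero,
      zero_add, Finset.sum_const_zero, Finset.sum_add_distrib, ← Finset.mul_sum] at h
    field_simp at h
    linarith
  have eCf : 2 * (x + 1) * Cf = 2 * (x + 1) * x + Bt + E + x * (x + 1) * A := by
    have hs : ∑ m : Fin n, (2 * (x + 1) * τ (Sum.inl false) (Sum.inr (true, m))) =
        ∑ m : Fin n, (2 * (x + 1) + τ (Sum.inl true) (Sum.inr (true, m))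
          + (∑ ℓ, τ (Sum.inr (false, ℓ)) (Sum.inr (true, m))) + (x + 1) * A) :=
      Finset.sum_congr rfl fun m _ => hCfp m
    simp only [Finset.sum_add_distrib, ← Finset.mul_sum, Finset.sum_const, Finset.card_univ,
      Fintype.card_fin, nsmul_eq_mul] at hs
    have hcomm : (∑ m : Fin n, ∑ l : Fin n, τ (Sum.inr (false, l)) (Sum.inr (true, m))) = E := by
      rw [hEdef]; rw [Finset.sum_comm]
    rw [hcomm] at hs
    rw [← hxdef, ← hBtdef, ← hCfdef] at hs
    linarith
  have eCt : 2 * (x + 1) * Ct = 2 * (x + 1) * x + Bf + E + x * (x + 1) * A := by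
    have hs : ∑ m : Fin n, (2 * (x + 1) * τ (Sum.inl true) (Sum.inr (false, m))) =
        ∑ m : Fin n, (2 * (x + 1) + τ (Sum.inl false) (Sum.inr (false, m))
          + (∑ ℓ, τ (Sum.inr (false, m)) (Sum.inr (true, ℓ))) + (x + 1) * A) :=
      Finset.sum_congr rfl fun m _ => hCtp m
    simp only [Finset.sum_add_distrib, ← Finset.mul_sum, Finset.sum_const, Finset.card_univ,
      Fintype.card_fin, nsmul_eq_mul] at hs
    rw [← hxdef, ← hBfdef, ← hCtdef, ← hEdef] at hs
    linarith
  -- leaf-leaf same hub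
  have hDfp : ∀ ℓ m : Fin n, τ (Sum.inr (false, ℓ)) (Sum.inr (false, m))
      + (if ℓ = m then 1 + τ (Sum.inl false) (Sum.inr (false, ℓ)) else 0) =
      1 + (1 / 2) * (τ (Sum.inl false) (Sum.inr (false, m))
        + τ (Sum.inl false) (Sum.inr (false, ℓ))) := by
    intro ℓ m
    by_cases hlm : ℓ = m
    · subst hlm
      simp [hzero]
      ring
    · have h := heq (Sum.inr (false, ℓ)) (Sum.inr (false, m)) (by simp [hlm])
      rw [sum_V] at h
      simp only [step_ll, step_lr, step_rl, step_rr, hzero, hsym1, hsym2, hsym3,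
        Bool.false_eq_true, Bool.true_eq_false, reduceIte, mul_zero, zero_mul, add_zero,
        zero_add, Finset.sum_const_zero, Finset.sum_add_distrib, ← Finset.mul_sum] at h
      simp only [hlm, if_false]
      linarith
  have hDtp : ∀ ℓ m : Fin n, τ (Sum.inr (true, ℓ)) (Sum.inr (true, m))
      + (if ℓ = m then 1 + τ (Sum.inl true) (Sum.inr (true, ℓ)) else 0) =
      1 + (1 / 2) * (τ (Sum.inl true) (Sum.inr (true, m))
        + τ (Sum.inl true) (Sum.inr (true, ℓ))) := by
    intro ℓ m
    by_cases hlm : ℓ = m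
    · subst hlm
      simp [hzero]
      ring
    · have h := heq (Sum.inr (true, ℓ)) (Sum.inr (true, m)) (by simp [hlm])
      rw [sum_V] at h
      simp only [step_ll, step_lr, step_rl, step_rr, hzero, hsym1, hsym2, hsym3,
        Bool.false_eq_true, Bool.true_eq_false, reduceIte, mul_zero, zero_mul, add_zero,
        zero_add, Finset.sum_const_zero, Finset.sum_add_distrib, ← Finset.mul_sum] at h
      simp only [hlm, if_false]
      linarith
  have eDf : Df + (x + Bf) = x ^ 2 + x * Bf := by
    have hs : ∑ ℓ : Fin n, ∑ m : Fin n, (τ (Sum.inr (false, ℓ)) (Sum.inr (false, m))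
        + (if ℓ = m then 1 + τ (Sum.inl false) (Sum.inr (false, ℓ)) else 0)) =
        ∑ ℓ : Fin n, ∑ m : Fin n, (1 + (1 / 2) * (τ (Sum.inl false) (Sum.inr (false, m))
          + τ (Sum.inl false) (Sum.inr (false, ℓ)))) :=
      Finset.sum_congr rfl fun ℓ _ => Finset.sum_congr rfl fun m _ => hDfp ℓ m
    simp only [Finset.sum_add_distrib, Finset.sum_ite_eq, Finset.mem_univ, if_true,
      ← Finset.mul_sum, Finset.sum_const, Finset.card_univ, Fintype.card_fin,
      nsmul_eq_mul] at hs
    rw [← hxdef, ← hBfdef, ← hDfdef] at hs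
    nlinarith [hs]
  have eDt : Dt + (x + Bt) = x ^ 2 + x * Bt := by
    have hs : ∑ ℓ : Fin n, ∑ m : Fin n, (τ (Sum.inr (true, ℓ)) (Sum.inr (true, m))
        + (if ℓ = m then 1 + τ (Sum.inl true) (Sum.inr (true, ℓ)) else 0)) =
        ∑ ℓ : Fin n, ∑ m : Fin n, (1 + (1 / 2) * (τ (Sum.inl true) (Sum.inr (true, m))
          + τ (Sum.inl true) (Sum.inr (true, ℓ)))) :=
      Finset.sum_congr rfl fun ℓ _ => Finset.sum_congr rfl fun m _ => hDtp ℓ m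
    simp only [Finset.sum_add_distrib, Finset.sum_ite_eq, Finset.mem_univ, if_true,
      ← Finset.mul_sum, Finset.sum_const, Finset.card_univ, Fintype.card_fin,
      nsmul_eq_mul] at hs
    rw [← hxdef, ← hBtdef, ← hDtdef] at hs
    nlinarith [hs]
  -- leaf-leaf across hubs
  have hEp : ∀ ℓ m : Fin n, 2 * τ (Sum.inr (false, ℓ)) (Sum.inr (true, m)) =
      2 + τ (Sum.inl false) (Sum.inr (true, m)) + τ (Sum.inl true) (Sum.inr (false, ℓ)) := by
    intro ℓ m
    have h := heq (Sum.inr (false, ℓ)) (Sum.inr (true, m)) (by simp)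
    rw [sum_V] at h
    simp only [step_ll, step_lr, step_rl, step_rr, hzero, hsym1, hsym2, hsym3,
      Bool.false_eq_true, Bool.true_eq_false, reduceIte, mul_zero, zero_mul, add_zero,
      zero_add, Finset.sum_const_zero, Finset.sum_add_distrib, ← Finset.mul_sum] at h
    linarith
  have eE : 2 * E = 2 * x ^ 2 + x * Cf + x * Ct := by
    have hs : ∑ ℓ : Fin n, ∑ m : Fin n, (2 * τ (Sum.inr (false, ℓ)) (Sum.inr (true, m))) =
        ∑ ℓ : Fin n, ∑ m : Fin n, (2 + τ (Sum.inl false) (Sum.inr (true, m))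
          + τ (Sum.inl true) (Sum.inr (false, ℓ))) :=
      Finset.sum_congr rfl fun ℓ _ => Finset.sum_congr rfl fun m _ => hEp ℓ m
    simp only [Finset.sum_add_distrib, ← Finset.mul_sum, Finset.sum_const, Finset.card_univ,
      Fintype.card_fin, nsmul_eq_mul] at hs
    rw [← hxdef, ← hCfdef, ← hCtdef, ← hEdef] at hs
    nlinarith [hs]
  -- closed forms
  have d1 : (2 * x + 5) * (Bf + Bt) = 20 * x ^ 2 + 10 * x := by
    linear_combination x * eA + 2 * eBf + 2 * eBt + eCf + eCt + 2 * eDf + 2 * eDt + eE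
  have h2' : 2 * (Cf + Ct) = 8 * x ^ 2 + 6 * x + (Bf + Bt) := by
    linear_combination eCf + eCt + eE + x * eA
  have d2 : (2 * x + 5) * (Cf + Ct) = 8 * x ^ 3 + 36 * x ^ 2 + 20 * x := by
    linear_combination ((2 * x + 5) / 2) * h2' + (1 / 2) * d1
  have d3 : (2 * x + 5) * (Df + Dt) = 24 * x ^ 3 - 4 * x ^ 2 - 20 * x := by
    linear_combination (2 * x + 5) * eDf + (2 * x + 5) * eDt + (x - 1) * d1
  have d4 : 2 * (x + 1) * (2 * x + 5) * A = 8 * x ^ 3 + 40 * x ^ 2 + 34 * x + 10 := by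
    linear_combination (2 * x + 5) * eA + d2
  have d5 : 2 * (2 * x + 5) * E = 8 * x ^ 4 + 40 * x ^ 3 + 30 * x ^ 2 := by
    linear_combination (2 * x + 5) * eE + x * d2
  -- values
  have hA' : A = (8 * x ^ 3 + 40 * x ^ 2 + 34 * x + 10) / (2 * (x + 1) * (2 * x + 5)) := by
    rw [eq_div_iff (by positivity)]
    linear_combination d4
  have hSB' : Bf + Bt = (20 * x ^ 2 + 10 * x) / (2 * x + 5) := by
    rw [eq_div_iff h25]; linear_combination d1
  have hSC' : Cf + Ct = (8 * x ^ 3 + 36 * x ^ 2 + 20 * x) / (2 * x + 5) := by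
    rw [eq_div_iff h25]; linear_combination d2
  have hSD' : Df + Dt = (24 * x ^ 3 - 4 * x ^ 2 - 20 * x) / (2 * x + 5) := by
    rw [eq_div_iff h25]; linear_combination d3
  have hE' : E = (8 * x ^ 4 + 40 * x ^ 3 + 30 * x ^ 2) / (2 * (2 * x + 5)) := by
    rw [eq_div_iff (by positivity)]; linear_combination d5
  -- tauWalk values
  have hT1 := tauWalk_eval τ hsym hzero 1 0 (1 / ((n : ℝ) + 1)) (1 / ((n : ℝ) + 1)) 0 1 0 0 0
    p1_ll p1_lr p1_rl p1_rr
  have hT2 := tauWalk_eval τ hsym hzero 2 (((n : ℝ) * ((n : ℝ) + 1) + 1) / ((n : ℝ) + 1) ^ 2) 0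
    0 (1 / ((n : ℝ) + 1) ^ 2) 0 (1 / ((n : ℝ) + 1)) (1 / ((n : ℝ) + 1)) 0
    p2_ll p2_lr p2_rl p2_rr
  have hT3 := tauWalk_eval τ hsym hzero 3 0 ((2 * (n : ℝ) ^ 2 + 2 * (n : ℝ) + 1) / ((n : ℝ) + 1) ^ 3)
    (((n : ℝ) ^ 2 + (n : ℝ) + 1) / ((n : ℝ) + 1) ^ 3) 0
    (((n : ℝ) ^ 2 + (n : ℝ) + 1) / ((n : ℝ) + 1) ^ 2) 0 0 (1 / ((n : ℝ) + 1) ^ 2)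
    p3_ll p3_lr p3_rl p3_rr
  rw [← hxdef, ← hAdef, ← hBfdef, ← hBtdef, ← hCfdef, ← hCtdef, ← hDfdef, ← hDtdef, ← hEdef]
    at hT1 hT2 hT3
  have hv1 : tauWalk (twoStarsW n) τ 1 =
      (48 * x ^ 3 + 100 * x ^ 2 + 54 * x + 10) / ((4 * x + 2) * (x + 1) * (2 * x + 5)) := by
    rw [hT1, hA', hSB', hSC', hSD', hE']
    field_simp
    ring
  have hv2 : tauWalk (twoStarsW n) τ 2 =
      (40 * x ^ 3 + 68 * x ^ 2 + 20 * x) / ((4 * x + 2) * (x + 1) * (2 * x + 5)) := by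
    rw [hT2, hA', hSB', hSC', hSD', hE']
    field_simp
    ring
  have hv3 : tauWalk (twoStarsW n) τ 3 =
      (64 * x ^ 5 + 244 * x ^ 4 + 346 * x ^ 3 + 238 * x ^ 2 + 74 * x + 10) /
        ((4 * x + 2) * (x + 1) ^ 3 * (2 * x + 5)) := by
    rw [hT3, hA', hSB', hSC', hSD', hE']
    field_simp
    ring
  have hvY : tauWalk (twoStarsW n) τ 3 - tauWalk (twoStarsW n) τ 1 =
      (16 * x ^ 5 + 48 * x ^ 4 + 44 * x ^ 3 + 20 * x ^ 2) /
        ((4 * x + 2) * (x + 1) ^ 3 * (2 * x + 5)) := by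
    rw [hv3, hv1]
    field_simp
    ring
  rw [hv2, hvY]
  rw [div_div_div_eq]
  rw [div_eq_div_iff (by positivity) hQ]
  ring

lemma twoStars_limit :
    Tendsto
      (fun n : ℕ =>
        ((n : ℝ) + 1) ^ 2 * (10 * (n : ℝ) ^ 2 + 17 * n + 5) /
          ((n : ℝ) * (4 * (n : ℝ) ^ 3 + 12 * (n : ℝ) ^ 2 + 11 * n + 5)))
      atTop (nhds (5 / 2)) := by
  have h0 : Tendsto (fun n : ℕ => 1 / (n : ℝ)) atTop (nhds 0) :=
    tendsto_one_div_atTop_nhds_zero_nat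
  have hnum : Tendsto (fun n : ℕ => 10 + 37 * (1 / (n : ℝ)) + 49 * (1 / (n : ℝ)) ^ 2
      + 27 * (1 / (n : ℝ)) ^ 3 + 5 * (1 / (n : ℝ)) ^ 4) atTop (nhds 10) := by
    have := (((tendsto_const_nhds (x := (10 : ℝ)) (f := atTop (α := ℕ))).add
      ((h0.const_mul 37))).add ((h0.pow 2).const_mul 49)).add
      ((h0.pow 3).const_mul 27) |>.add ((h0.pow 4).const_mul 5)
    simpa using this
  have hden : Tendsto (fun n : ℕ => 4 + 12 * (1 / (n : ℝ)) + 11 * (1 / (n : ℝ)) ^ 2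
      + 5 * (1 / (n : ℝ)) ^ 3) atTop (nhds 4) := by
    have := (((tendsto_const_nhds (x := (4 : ℝ)) (f := atTop (α := ℕ))).add
      ((h0.const_mul 12))).add ((h0.pow 2).const_mul 11)).add
      ((h0.pow 3).const_mul 5)
    simpa using this
  have hdiv := hnum.div hden (by norm_num)
  have h52 : (10 : ℝ) / 4 = 5 / 2 := by norm_num
  rw [h52] at hdiv
  refine hdiv.congr' ?_
  filter_upwards [eventually_ge_atTop 1] with n hn
  have hx0 : (0 : ℝ) < (n : ℝ) := by exact_mod_cast hn
  have hx : ((n : ℝ)) ≠ 0 := ne_of_gt hx0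
  have hq : (0 : ℝ) < 4 * (n : ℝ) ^ 3 + 12 * (n : ℝ) ^ 2 + 11 * n + 5 := by positivity
  simp only [Pi.div_apply]
  field_simp
  ring

/-- for two `n`-stars joined at their hubs,
`(b/c)* = (n+1)²(10n² + 17n + 5) / (n(4n³ + 12n² + 11n + 5))`, which tends to
`5/2` as `n → ∞`. -/
theorem twoStars_bc :
    (∀ n : ℕ, 1 ≤ n →
      ∀ τ : (Bool ⊕ Bool × Fin n) → (Bool ⊕ Bool × Fin n) → ℝ,
        IsCoalescent (twoStarsW n) τ →
        tauWalk (twoStarsW n) τ 2 /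
            (tauWalk (twoStarsW n) τ 3 - tauWalk (twoStarsW n) τ 1) =
          ((n : ℝ) + 1) ^ 2 * (10 * (n : ℝ) ^ 2 + 17 * n + 5) /
            ((n : ℝ) * (4 * (n : ℝ) ^ 3 + 12 * (n : ℝ) ^ 2 + 11 * n + 5))) ∧
    Tendsto
      (fun n : ℕ =>
        ((n : ℝ) + 1) ^ 2 * (10 * (n : ℝ) ^ 2 + 17 * n + 5) /
          ((n : ℝ) * (4 * (n : ℝ) ^ 3 + 12 * (n : ℝ) ^ 2 + 11 * n + 5)))
      atTop (nhds (5 / 2)) := by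
  exact ⟨fun n hn τ hc => twoStars_ratio hn τ hc, twoStars_limit⟩

end EvoGraph
end
end
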